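/- Let k be a commutative ring, R a localization of a quotient of the polynomial ring k[X], and K a field. Then for every ring homomorphism g : R → K, the K-vector space Der_k^g(R, K) of k-linear derivations of R into K with respect to g has dimension at most 1. -/

import Mathlib

open Polynomial

/-- A `g`-derivation vanishing on constants and on the image of `X` vanishes. -/
lemma deriv_eq_zero {k K : Type} [CommRing k] [Field K]
    (I : Ideal (Polynomial k)) (S : Submonoid ((Polynomial k) ⧸ I))
    (g : Localization S →+* K)
    (δ : Localization S → K)
    (hadd : ∀ a b, δ (a + b) = δ a + δ b)
    (hleib : ∀ a b, δ (a * b) = δ a * g b + g a * δ b)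
    (hk : ∀ c : k, δ (algebraMap ((Polynomial k) ⧸ I) (Localization S)
      (Ideal.Quotient.mk I (Polynomial.C c))) = 0)
    (hX : δ (algebraMap ((Polynomial k) ⧸ I) (Localization S)
      (Ideal.Quotient.mk I Polynomial.X)) = 0) :
    ∀ r, δ r = 0 := by
  have hquot : ∀ q : (Polynomial k) ⧸ I,
      δ (algebraMap ((Polynomial k) ⧸ I) (Localization S) q) = 0 := by
    intro q
    obtain ⟨p, rfl⟩ := Ideal.Quotient.mk_surjective q
    induction p using Polynomial.induction_on with
    | C a => exact hk a
    | add p q hp hq =>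
        rw [(Ideal.Quotient.mk I).map_add, (algebraMap ((Polynomial k) ⧸ I) (Localization S)).map_add,
          hadd, hp, hq, add_zero]
    | monomial n a ih =>
        have : (Ideal.Quotient.mk I) (Polynomial.C a * X ^ (n + 1)) =
            (Ideal.Quotient.mk I) (Polynomial.C a * X ^ n) *
              (Ideal.Quotient.mk I) X := by
          rw [← map_mul]; ring_nf
        rw [this, (algebraMap ((Polynomial k) ⧸ I) (Localization S)).map_mul, hleib, ih, hX,
          mul_zero, zero_mul, add_zero]
  intro r
  obtain ⟨⟨a, s⟩, rfl⟩ := IsLocalization.mk'_surjective S r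
  have hspec := IsLocalization.mk'_spec (Localization S) a s
  have h1 := hleib (IsLocalization.mk' (Localization S) a s)
    (algebraMap ((Polynomial k) ⧸ I) (Localization S) s)
  rw [hspec, hquot, hquot, mul_zero, add_zero] at h1
  have hu : IsUnit (g (algebraMap ((Polynomial k) ⧸ I) (Localization S) s)) :=
    (IsLocalization.map_units (Localization S) s).map g
  exact (mul_eq_zero.mp h1.symm).resolve_right hu.ne_zero

/-- Let `k` be a commutative ring and `R = S⁻¹(k[X]/I)` a localization of a quotient
of `k[X]`. Then for every field `K` and ring homomorphism `g : R →+* K`, the space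
of `k`-linear derivations of `R` into `K` with respect to `g` has dimension at most 1:
any two such derivations are `K`-linearly dependent. -/
theorem stmt_11 {k K : Type} [CommRing k] [Field K]
    (I : Ideal (Polynomial k)) (S : Submonoid ((Polynomial k) ⧸ I))
    (g : Localization S →+* K)
    (δ₁ δ₂ : Localization S → K)
    (hadd₁ : ∀ a b, δ₁ (a + b) = δ₁ a + δ₁ b)
    (hleib₁ : ∀ a b, δ₁ (a * b) = δ₁ a * g b + g a * δ₁ b)
    (hk₁ : ∀ c : k, δ₁ (algebraMap ((Polynomial k) ⧸ I) (Localization S)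
      (Ideal.Quotient.mk I (Polynomial.C c))) = 0)
    (hadd₂ : ∀ a b, δ₂ (a + b) = δ₂ a + δ₂ b)
    (hleib₂ : ∀ a b, δ₂ (a * b) = δ₂ a * g b + g a * δ₂ b)
    (hk₂ : ∀ c : k, δ₂ (algebraMap ((Polynomial k) ⧸ I) (Localization S)
      (Ideal.Quotient.mk I (Polynomial.C c))) = 0) :
    ∃ c₁ c₂ : K, ¬(c₁ = 0 ∧ c₂ = 0) ∧ ∀ r, c₁ * δ₁ r + c₂ * δ₂ r = 0 := by
  set t : Localization S :=
    algebraMap ((Polynomial k) ⧸ I) (Localization S) (Ideal.Quotient.mk I Polynomial.X)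
  by_cases h : δ₁ t = 0
  · refine ⟨1, 0, fun hc => one_ne_zero hc.1, fun r => ?_⟩
    rw [deriv_eq_zero I S g δ₁ hadd₁ hleib₁ hk₁ h r]
    ring
  · refine ⟨δ₂ t, -δ₁ t, fun hc => h (neg_eq_zero.mp hc.2), fun r => ?_⟩
    have := deriv_eq_zero I S g (fun x => δ₂ t * δ₁ x - δ₁ t * δ₂ x)
      (fun a b => by simp only [hadd₁, hadd₂]; ring)
      (fun a b => by simp only [hleib₁, hleib₂]; ring)
      (fun c => by simp only [hk₁, hk₂]; ring)
      (by show δ₂ t * δ₁ t - δ₁ t * δ₂ t = 0; ring) r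
    linear_combination this
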